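/- Let k be a field of characteristic p and I ⊂ D a homogeneous ideal generated in degrees ≤ d. Then the maximal degree occurring in Tor_1^D(k, I) is at most d − 1 + p^{ℓ(d)+1}, where ℓ(d) is the least r ≥ 0 with d ≤ p^r. -/

import Mathlib

/-- Carry criterion: `p` does not divide `C(a+b, a)` iff adding `a` and `b` in base `p`
has no carries. -/
lemma critD {p : ℕ} (hp : p.Prime) (a b : ℕ) :
    ¬ p ∣ (a + b).choose a ↔ ∀ j : ℕ, a % p ^ j + b % p ^ j < p ^ j := by
  have hmult := Nat.Prime.emultiplicity_choose' (p := p) (n := b) (k := a)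
      hp (b := Nat.log p (b + a) + 1) (Nat.lt_succ_self _)
  rw [Nat.add_comm b a] at hmult
  rw [← emultiplicity_eq_zero, hmult]
  rw [Nat.cast_eq_zero, Finset.card_eq_zero, Finset.filter_eq_empty_iff]
  constructor
  · intro H j
    rcases Nat.eq_zero_or_pos j with rfl | hj
    · simp [Nat.mod_one]
    by_cases hjb : j < Nat.log p (a + b) + 1
    · have := H (Finset.mem_Ico.mpr ⟨hj, hjb⟩)
      omega
    · push_neg at hjb
      have h1 : a + b < p ^ j := Nat.lt_pow_of_log_lt hp.one_lt (by omega)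
      have h2 : a % p ^ j ≤ a := Nat.mod_le _ _
      have h3 : b % p ^ j ≤ b := Nat.mod_le _ _
      omega
  · intro H i _
    have := H i; omega

/-- Subset-of-subset binomial identity. -/
lemma chidD {e n₀ n : ℕ} (h1 : e ≤ n₀) (h2 : n₀ ≤ n) :
    n.choose e * (n - e).choose (n₀ - e) = n₀.choose e * n.choose n₀ := by
  have he : e ≤ n := le_trans h1 h2
  refine Nat.eq_of_mul_eq_mul_right
    (Nat.mul_pos e.factorial_pos (Nat.mul_pos (n₀ - e).factorial_pos (n - n₀).factorial_pos)) ?_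
  have hA : n.choose e * e.factorial * (n - e).factorial = n.factorial :=
    Nat.choose_mul_factorial_mul_factorial he
  have hB : (n - e).choose (n₀ - e) * (n₀ - e).factorial * ((n - e) - (n₀ - e)).factorial
      = (n - e).factorial := Nat.choose_mul_factorial_mul_factorial (by omega)
  have hC : n₀.choose e * e.factorial * (n₀ - e).factorial = n₀.factorial :=
    Nat.choose_mul_factorial_mul_factorial h1
  have hD : n.choose n₀ * n₀.factorial * (n - n₀).factorial = n.factorial :=
    Nat.choose_mul_factorial_mul_factorial h2
  have hE : (n - e) - (n₀ - e) = n - n₀ := by omega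
  rw [hE] at hB
  calc n.choose e * (n - e).choose (n₀ - e) *
        (e.factorial * ((n₀ - e).factorial * (n - n₀).factorial))
      = (n.choose e * e.factorial) *
        ((n - e).choose (n₀ - e) * (n₀ - e).factorial * (n - n₀).factorial) := by ring
    _ = (n.choose e * e.factorial) * (n - e).factorial := by rw [hB]
    _ = n.factorial := by rw [← hA]
    _ = (n.choose n₀ * n₀.factorial * (n - n₀).factorial) := hD.symm
    _ = (n₀.choose e * e.factorial * (n₀ - e).factorial) * n.choose n₀ * (n - n₀).factorial := by
        rw [hC]; ring
    _ = n₀.choose e * n.choose n₀ *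
        (e.factorial * ((n₀ - e).factorial * (n - n₀).factorial)) := by ring

/-- Truncation to residues mod `q = p^s` preserves non-divisibility of binomials. -/
lemma modqD {p : ℕ} (hp : p.Prime) {s e N : ℕ} (he : e ≤ N) (heq : e < p ^ s)
    (hnd : ¬ p ∣ N.choose e) :
    e ≤ N % p ^ s ∧ N % p ^ s - e = (N - e) % p ^ s ∧
      ¬ p ∣ (N % p ^ s).choose e ∧ ¬ p ∣ (N - e).choose ((N - e) % p ^ s) := by
  set q := p ^ s with hqdef
  set m := N - e with hmdef
  have hNem : N = e + m := by omega
  have hcrit : ∀ j : ℕ, e % p ^ j + m % p ^ j < p ^ j := by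
    rw [hNem] at hnd
    exact (critD hp e m).mp hnd
  have hqpos : 0 < q := pow_pos hp.pos s
  have heq' : e % q = e := Nat.mod_eq_of_lt heq
  have hs : e + m % q < q := by have := hcrit s; rwa [heq'] at this
  have hN0 : N % q = e + m % q := by
    rw [hNem, Nat.add_mod, heq', Nat.mod_eq_of_lt hs]
  refine ⟨by omega, by omega, ?_, ?_⟩
  · -- ¬ p ∣ (N % q).choose e  where N % q = e + m % q
    rw [hN0, critD hp]
    intro j
    by_cases hjs : j ≤ s
    · have h4 : (m % q) % p ^ j = m % p ^ j :=
        Nat.mod_mod_of_dvd _ (pow_dvd_pow p hjs)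
      rw [h4]; exact hcrit j
    · push_neg at hjs
      have hq' : q ≤ p ^ j := Nat.pow_le_pow_right hp.pos (by omega)
      have h1 : e % p ^ j = e := Nat.mod_eq_of_lt (by omega)
      have h2 : (m % q) % p ^ j = m % q := Nat.mod_eq_of_lt (by
        have := Nat.mod_lt m hqpos; omega)
      omega
  · -- ¬ p ∣ m.choose (m % q)
    have hmge : m % q ≤ m := Nat.mod_le _ _
    have hrw : m.choose (m % q) = (m % q + (m - m % q)).choose (m % q) := by
      congr 1; omega
    rw [hrw, critD hp]
    intro j
    set b := m - m % q with hbdef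
    have hqb : q ∣ b := Nat.dvd_sub_mod m
    have hjpos : 0 < p ^ j := pow_pos hp.pos j
    by_cases hjs : j ≤ s
    · have h0 : b % p ^ j = 0 := by
        have hd : p ^ j ∣ b % p ^ j := (Nat.dvd_mod_iff (dvd_refl (p ^ j))).mpr
          (dvd_trans (pow_dvd_pow p hjs) hqb)
        exact Nat.eq_zero_of_dvd_of_lt hd (Nat.mod_lt _ hjpos)
      have := Nat.mod_lt (m % q) hjpos
      omega
    · push_neg at hjs
      have hq' : q ≤ p ^ j := Nat.pow_le_pow_right hp.pos (by omega)
      have h1 : (m % q) % p ^ j = m % q := Nat.mod_eq_of_lt (by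
        have := Nat.mod_lt m hqpos; omega)
      have hbm : q ∣ b % p ^ j :=
        (Nat.dvd_mod_iff (pow_dvd_pow p (by omega : s ≤ j))).mpr hqb
      have hblt : b % p ^ j < p ^ j := Nat.mod_lt _ hjpos
      have hmq : m % q < q := Nat.mod_lt m hqpos
      rcases Nat.eq_zero_or_pos (b % p ^ j) with h0 | hpos
      · omega
      · have hdiff : q ∣ p ^ j - b % p ^ j :=
          Nat.dvd_sub (pow_dvd_pow p (by omega : s ≤ j)) hbm
        have : q ≤ p ^ j - b % p ^ j := Nat.le_of_dvd (by omega) hdiff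
        omega

/-- Existence of a low-degree monomial annihilator generator. -/
lemma genBD {p : ℕ} (hp : p.Prime) {l d e m : ℕ} (hdl : d ≤ p ^ l) (hed : e ≤ d)
    (hdvd : p ∣ (e + m).choose e) :
    ∃ a, a + e ≤ d + p ^ (l + 1) - 1 ∧ p ∣ (a + e).choose a ∧ a ≤ m ∧
      ¬ p ∣ m.choose a := by
  have hex : ∃ j : ℕ, p ^ j ≤ e % p ^ j + m % p ^ j := by
    by_contra hall
    push_neg at hall
    exact absurd hdvd ((critD hp e m).mpr (fun j => hall j))
  classical
  obtain ⟨j, hj, hjmin⟩ : ∃ j, (p ^ j ≤ e % p ^ j + m % p ^ j) ∧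
      ∀ j' < j, e % p ^ j' + m % p ^ j' < p ^ j' := by
    refine ⟨Nat.find hex, Nat.find_spec hex, fun j' hj' => ?_⟩
    have := Nat.find_min hex hj'; omega
  have hj1 : 1 ≤ j := by
    by_contra hcon; push_neg at hcon
    interval_cases j
    simp at hj; omega
  obtain ⟨t, rfl⟩ : ∃ t, j = t + 1 := ⟨j - 1, by omega⟩
  obtain ⟨et, hetdef⟩ : ∃ x : ℕ, x = e / p ^ t % p := ⟨_, rfl⟩
  obtain ⟨mt, hmtdef⟩ : ∃ x : ℕ, x = m / p ^ t % p := ⟨_, rfl⟩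
  have hmode : e % p ^ (t + 1) = e % p ^ t + p ^ t * et := by
    rw [hetdef]; exact Nat.mod_pow_succ
  have hmodm : m % p ^ (t + 1) = m % p ^ t + p ^ t * mt := by
    rw [hmtdef]; exact Nat.mod_pow_succ
  have hmin : e % p ^ t + m % p ^ t < p ^ t := hjmin t (by omega)
  have htpos : 0 < p ^ t := pow_pos hp.pos t
  have hp2 : 2 ≤ p := hp.two_le
  have hpmt : et + mt ≥ p := by
    rw [hmode, hmodm, pow_succ] at hj
    nlinarith [hj, hmin]
  have hmtlt : mt < p := by rw [hmtdef]; exact Nat.mod_lt _ (by omega)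
  have hetlt : et < p := by rw [hetdef]; exact Nat.mod_lt _ (by omega)
  have het1 : 1 ≤ et := by omega
  obtain ⟨a, hadef⟩ : ∃ x : ℕ, x = (p - et) * p ^ t := ⟨_, rfl⟩
  have hpt_e : p ^ t ≤ e := by
    have : 1 ≤ e / p ^ t := by
      by_contra hcon; push_neg at hcon
      have h0 : e / p ^ t = 0 := Nat.lt_one_iff.mp hcon
      have : et = 0 := by rw [hetdef, h0]; simp
      omega
    calc p ^ t = 1 * p ^ t := (one_mul _).symm
    _ ≤ (e / p ^ t) * p ^ t := Nat.mul_le_mul_right _ this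
    _ ≤ e := Nat.div_mul_le_self e _
  have htl : t ≤ l := by
    have : p ^ t ≤ p ^ l := le_trans hpt_e (le_trans hed hdl)
    exact (Nat.pow_le_pow_iff_right hp.one_lt).mp this
  have hapt : a < p ^ (t + 1) := by
    rw [hadef, pow_succ]
    have h1 : p - et < p := by omega
    exact lt_of_lt_of_eq ((Nat.mul_lt_mul_right htpos).mpr h1) (Nat.mul_comm p (p ^ t))
  have haq : a ≤ p ^ (l + 1) - p ^ t := by
    have h1 : a ≤ (p - 1) * p ^ t := by rw [hadef]; exact Nat.mul_le_mul_right _ (by omega)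
    have h2 : (p - 1) * p ^ t = p ^ (t + 1) - p ^ t := by
      rw [pow_succ, Nat.mul_comm (p ^ t) p]; cases p; · omega
      · rw [Nat.succ_sub_one, Nat.succ_mul]; omega
    have h3 : p ^ (t + 1) ≤ p ^ (l + 1) := Nat.pow_le_pow_right hp.pos (by omega)
    omega
  refine ⟨a, ?_, ?_, ?_, ?_⟩
  · -- degree bound
    have : 1 ≤ p ^ t := htpos
    have : 1 ≤ p ^ (l+1) := pow_pos hp.pos _
    omega
  · -- p ∣ C(a+e, a)
    by_contra hnd
    have hcrit := (critD hp a e).mp hnd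
    have := hcrit (t + 1)
    have hae : a % p ^ (t + 1) = a := Nat.mod_eq_of_lt hapt
    rw [hae, hmode] at this
    have h2 : a + p ^ t * et < p ^ (t + 1) := by linarith [Nat.zero_le (e % p ^ t)]
    have h3 : a + p ^ t * et = p ^ (t + 1) := by
      rw [hadef, pow_succ, Nat.mul_comm (p - et) (p ^ t), ← Nat.mul_add]
      congr 1
      omega
    rw [h3] at h2
    exact Nat.lt_irrefl _ h2
  · -- a ≤ m
    have h1 : p ^ t * mt ≤ m % p ^ (t + 1) := by
      rw [hmodm]; exact Nat.le_add_left _ _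
    have h2 : m % p ^ (t+1) ≤ m := Nat.mod_le _ _
    have h3 : a ≤ p ^ t * mt := by
      rw [hadef, Nat.mul_comm]; exact Nat.mul_le_mul_left _ (by omega)
    exact le_trans h3 (le_trans h1 h2)
  · -- ¬ p ∣ C(m, a)
    have ham : a ≤ m := by
      have h1 : p ^ t * mt ≤ m % p ^ (t + 1) := by
        rw [hmodm]; exact Nat.le_add_left _ _
      have h2 : m % p ^ (t+1) ≤ m := Nat.mod_le _ _
      have h3 : a ≤ p ^ t * mt := by
        rw [hadef, Nat.mul_comm]; exact Nat.mul_le_mul_left _ (by omega)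
      exact le_trans h3 (le_trans h1 h2)
    have hrw : m.choose a = (a + (m - a)).choose a := by congr 1; omega
    rw [hrw, critD hp]
    intro s'
    have hspos : 0 < p ^ s' := pow_pos hp.pos s'
    by_cases hs : s' ≤ t
    · have h0 : a % p ^ s' = 0 := by
        have : p ^ s' ∣ a := by rw [hadef]; exact Dvd.dvd.mul_left (pow_dvd_pow p hs) _
        exact Nat.eq_zero_of_dvd_of_lt ((Nat.dvd_mod_iff (dvd_refl _)).mpr this)
          (Nat.mod_lt _ hspos)
      have := Nat.mod_lt (m - a) hspos
      omega
    · push_neg at hs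
      have hts : t + 1 ≤ s' := by omega
      have ha' : a % p ^ s' = a := Nat.mod_eq_of_lt (lt_of_lt_of_le hapt
        (Nat.pow_le_pow_right hp.pos hts))
      have hma : a ≤ m % p ^ s' := by
        have h1 : (m % p ^ s') % p ^ (t+1) = m % p ^ (t+1) :=
          Nat.mod_mod_of_dvd _ (pow_dvd_pow p hts)
        have h2 : m % p ^ (t+1) ≤ m % p ^ s' := by
          rw [← h1]; exact Nat.mod_le _ _
        have h3 : a ≤ m % p ^ (t + 1) := by
          have h5 : p ^ t * mt ≤ m % p ^ (t + 1) := by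
            rw [hmodm]; exact Nat.le_add_left _ _
          have h4 : a ≤ p ^ t * mt := by
            rw [hadef, Nat.mul_comm]; exact Nat.mul_le_mul_left _ (by omega)
          exact le_trans h4 h5
        omega
      have hsub : (m - a) % p ^ s' = m % p ^ s' - a := by
        have hdm : m = p ^ s' * (m / p ^ s') + m % p ^ s' := (Nat.div_add_mod m _).symm
        have : m - a = p ^ s' * (m / p ^ s') + (m % p ^ s' - a) := by omega
        rw [this, Nat.add_comm, Nat.add_mul_mod_self_left]
        exact Nat.mod_eq_of_lt (by have := Nat.mod_lt m hspos; omega)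
      rw [ha', hsub]
      have := Nat.mod_lt m hspos
      omega

noncomputable def ellD (p : ℕ) (z : ℤ) : ℕ := sInf {r : ℕ | z ≤ (p : ℤ) ^ r}

/-- Let `I ⊂ D` be a homogeneous ideal generated in degrees `≤ d`, over a field of
characteristic `p`. Then `maxdeg Tor₁^D(k, I) ≤ d - 1 + p^{ℓ(d)+1}`: concretely, for any
graded free cover `φ : F → I` with generators in degrees `≤ d`, the kernel of `φ` (whose
generating degrees compute `Tor₁`) is generated by elements of degree
`≤ d - 1 + p^{ℓ(d)+1}`. -/
theorem stmt16 (p : ℕ) (hp : p.Prime) (k D : Type*) [Field k] [CharP k p]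
    [CommRing D] [Algebra k D]
    (B : Module.Basis ℕ k D) (hone : B 0 = 1)
    (hmul : ∀ n m : ℕ, B n * B m = ((n + m).choose n : k) • B (n + m))
    (d : ℕ) (I : Ideal D)
    (hI : ∃ T : Set ℕ, (∀ n ∈ T, n ≤ d) ∧ I = Ideal.span (B '' T))
    (ι : Type*) [Fintype ι] (degF : ι → ℕ) (hdegF : ∀ i, degF i ≤ d)
    (φ : (ι →₀ D) →ₗ[D] D)
    (hφhom : ∀ i : ι, ∃ c : k, φ (Finsupp.single i 1) = c • B (degF i))
    (hφrange : LinearMap.range φ = I) :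
    LinearMap.ker φ = Submodule.span D
      {x : ι →₀ D | x ∈ LinearMap.ker φ ∧ ∀ (i : ι) (n : ℕ), B.repr (x i) n ≠ 0 →
        (n : ℤ) + degF i ≤ (d : ℤ) - 1 + (p : ℤ) ^ (ellD p (d : ℤ) + 1)} := by
  classical
  choose c hc using hφhom
  set L := ellD p (d : ℤ) with hLdef
  have hp2 : 2 ≤ p := hp.two_le
  -- basic numerics about L
  have hL : d ≤ p ^ L := by
    have hne : ((d : ℤ)) ≤ (p : ℤ) ^ d := by
      have h1 : d < 2 ^ d := Nat.lt_two_pow_self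
      have h2 : (2:ℕ) ^ d ≤ p ^ d := Nat.pow_le_pow_left hp2 d
      push_cast
      exact_mod_cast le_of_lt (lt_of_lt_of_le h1 h2)
    have hmem : (d : ℤ) ≤ (p : ℤ) ^ L := by
      rw [hLdef]
      exact Nat.sInf_mem (⟨d, hne⟩ : {r : ℕ | (d:ℤ) ≤ (p:ℤ) ^ r}.Nonempty)
    exact_mod_cast hmem
  have hq2 : 2 ≤ p ^ (L + 1) := le_trans hp2 (Nat.le_self_pow (by omega) p)
  have hdq : d < p ^ (L + 1) :=
    lt_of_le_of_lt hL (Nat.pow_lt_pow_succ hp.one_lt)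
  set M := d + p ^ (L + 1) - 1 with hMdef
  have hcond : ∀ n e : ℕ, ((n:ℤ) + e ≤ (d:ℤ) - 1 + (p:ℤ) ^ (L + 1)) ↔ n + e ≤ M := by
    intro n e
    have h1 : ((p ^ (L+1) : ℕ) : ℤ) = (p:ℤ) ^ (L+1) := by push_cast; ring
    rw [← h1, hMdef]
    omega
  -- helper: k-action via algebra map
  have phik : ∀ (a : k) (v : ι →₀ D), φ (a • v) = a • φ v := by
    intro a v
    rw [← algebraMap_smul D a v, map_smul, algebraMap_smul]
  have hsmulcomm : ∀ (a : k) (f : D) (v : ι →₀ D), f • (a • v) = a • (f • v) := by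
    intro a f v
    rw [← algebraMap_smul D a v, ← algebraMap_smul D a (f • v), smul_smul, smul_smul, mul_comm]
  -- repr of products with basis elements
  have mul_repr : ∀ (f : D) (m t : ℕ), B.repr (f * B m) t =
      if m ≤ t then B.repr f (t - m) * ((t.choose m : ℕ) : k) else 0 := by
    intro f m t
    conv_lhs => rw [← B.linearCombination_repr f]
    rw [Finsupp.linearCombination_apply, Finsupp.sum, Finset.sum_mul, map_sum,
      Finset.sum_apply']
    have hterm : ∀ n ∈ (B.repr f).support, B.repr ((B.repr f n • B n) * B m) t
        = if n + m = t then B.repr f n * (((n+m).choose n : ℕ) : k) else 0 := by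
      intro n _
      rw [smul_mul_assoc, hmul, smul_smul, map_smul, B.repr_self, Finsupp.smul_apply,
        Finsupp.single_apply, smul_eq_mul]
      by_cases h : n + m = t <;> simp [h]
    rw [Finset.sum_congr rfl hterm]
    by_cases hmt : m ≤ t
    · rw [if_pos hmt, Finset.sum_eq_single (t - m)]
      · rw [if_pos (by omega)]
        have h2 : ((t - m) + m).choose (t - m) = t.choose m := by
          rw [Nat.sub_add_cancel hmt, Nat.choose_symm hmt]
        rw [h2]
      · intro b _ hb
        rw [if_neg (by omega)]
      · intro hns
        rw [Finsupp.notMem_support_iff.mp hns]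
        simp
    · rw [if_neg hmt, Finset.sum_eq_zero]
      intro b _
      rw [if_neg (by omega)]
  have hsmulcommD : ∀ (a : k) (f x : D), f • (a • x) = a • (f * x) := by
    intro a f x
    rw [← algebraMap_smul D a x, ← algebraMap_smul D a (f * x), smul_eq_mul, smul_eq_mul,
      smul_eq_mul]
    ring
  -- φ on singles
  have phi_single : ∀ (i : ι) (f : D), φ (Finsupp.single i f) = c i • (f * B (degF i)) := by
    intro i f
    have h1 : Finsupp.single i f = f • Finsupp.single i (1:D) := by
      rw [Finsupp.smul_single, smul_eq_mul, mul_one]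
    rw [h1, map_smul, hc i]
    exact hsmulcommD _ _ _
  -- repr formula for φ
  have phi_apply : ∀ (x : ι →₀ D) (t : ℕ), B.repr (φ x) t = ∑ i ∈ x.support,
      (if degF i ≤ t then c i * (B.repr (x i) (t - degF i) * ((t.choose (degF i) : ℕ) : k))
       else 0) := by
    intro x t
    have hx : φ x = ∑ i ∈ x.support, c i • (x i * B (degF i)) := by
      conv_lhs => rw [← Finsupp.sum_single x]
      rw [Finsupp.sum, map_sum]
      exact Finset.sum_congr rfl fun i _ => phi_single i (x i)
    rw [hx, map_sum, Finset.sum_apply']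
    refine Finset.sum_congr rfl fun i _ => ?_
    rw [map_smul, Finsupp.smul_apply, mul_repr, smul_eq_mul]
    by_cases h : degF i ≤ t <;> simp [h]
  have ker_sum : ∀ x : ι →₀ D, x ∈ LinearMap.ker φ → ∀ t : ℕ,
      (∑ i ∈ x.support, (if degF i ≤ t then
        c i * (B.repr (x i) (t - degF i) * ((t.choose (degF i) : ℕ) : k)) else 0)) = 0 := by
    intro x hx t
    rw [← phi_apply]
    rw [LinearMap.mem_ker] at hx
    rw [hx]
    simp
  -- span closed under k-scalars
  have hTk : ∀ (a : k) (v : ι →₀ D) (W : Submodule D (ι →₀ D)), v ∈ W → a • v ∈ W := by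
    intro a v W hv
    rw [← algebraMap_smul D a v]
    exact Submodule.smul_mem _ _ hv
  -- repr of singles of basis vectors
  have hrepr_single : ∀ (i i₁ : ι) (s n : ℕ),
      B.repr ((Finsupp.single i (B s) : ι →₀ D) i₁) n ≠ 0 → i₁ = i ∧ n = s := by
    intro i i₁ s n hn
    by_cases hii : i = i₁
    · subst hii
      rw [Finsupp.single_eq_same, B.repr_self, Finsupp.single_apply] at hn
      by_cases hsn : s = n
      · exact ⟨rfl, hsn.symm⟩
      · rw [if_neg hsn] at hn; simp at hn
    · rw [Finsupp.single_eq_of_ne' hii, map_zero] at hn; simp at hn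
  -- the main induction
  have key : ∀ N : ℕ, ∀ x : ι →₀ D, x ∈ LinearMap.ker φ →
      (∀ i n, B.repr (x i) n ≠ 0 → n + degF i ≤ N) →
      x ∈ Submodule.span D {x : ι →₀ D | x ∈ LinearMap.ker φ ∧
        ∀ (i : ι) (n : ℕ), B.repr (x i) n ≠ 0 →
          (n : ℤ) + degF i ≤ (d : ℤ) - 1 + (p : ℤ) ^ (L + 1)} := by
    intro N
    induction N using Nat.strong_induction_on with
    | _ N IH =>
      intro x hx hdeg
      by_cases hNM : N ≤ M
      · exact Submodule.subset_span
          ⟨hx, fun i n hn => (hcond n (degF i)).mpr (le_trans (hdeg i n hn) hNM)⟩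
      · push_neg at hNM
        have hdA : ∀ i ∈ x.support, degF i ≤ N := by
          intro i hi
          rw [Finsupp.mem_support_iff] at hi
          obtain ⟨n, hn⟩ : ∃ n, B.repr (x i) n ≠ 0 := by
            by_contra hall
            push_neg at hall
            apply hi
            apply B.repr.injective
            rw [map_zero]
            ext n
            simpa using hall n
          exact le_trans (Nat.le_add_left _ _) (hdeg i n hn)
        obtain ⟨lam, hlam⟩ : ∃ lam : ι → k, lam = fun i => B.repr (x i) (N - degF i) :=
          ⟨_, rfl⟩
        obtain ⟨h, hh⟩ : ∃ h : ι →₀ D,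
            h = ∑ i ∈ x.support, lam i • Finsupp.single i (B (N - degF i)) := ⟨_, rfl⟩
        have hrel : (∑ i ∈ x.support,
            lam i * (c i * ((N.choose (degF i) : ℕ) : k))) = 0 := by
          rw [← ker_sum x hx N]
          refine Finset.sum_congr rfl fun i hi => ?_
          rw [if_pos (hdA i hi), hlam]
          ring
        have hφh : φ h = 0 := by
          rw [hh, map_sum]
          have hterm : ∀ i ∈ x.support, φ (lam i • Finsupp.single i (B (N - degF i)))
              = (lam i * (c i * ((N.choose (degF i) : ℕ) : k))) • B N := by
            intro i hi
            rw [phik, phi_single, hmul, Nat.sub_add_cancel (hdA i hi),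
              Nat.choose_symm (hdA i hi), smul_smul, smul_smul, mul_assoc]
          rw [Finset.sum_congr rfl hterm, ← Finset.sum_smul, hrel, zero_smul]
        have hxh : x - h ∈ LinearMap.ker φ := by
          rw [LinearMap.mem_ker, map_sub, hφh, sub_zero]
          exact hx
        have happ : ∀ i : ι, h i = lam i • B (N - degF i) := by
          intro i
          rw [hh, Finset.sum_apply']
          by_cases hi : i ∈ x.support
          · rw [Finset.sum_eq_single i]
            · rw [Finsupp.smul_apply, Finsupp.single_eq_same]
            · intro j _ hj
              rw [Finsupp.smul_apply, Finsupp.single_eq_of_ne' hj, smul_zero]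
            · intro hni; exact absurd hi hni
          · have hlz : lam i = 0 := by
              rw [hlam]
              simp only []
              rw [Finsupp.notMem_support_iff.mp hi]
              simp
            rw [hlz, zero_smul, Finset.sum_eq_zero]
            intro j hj
            rw [Finsupp.smul_apply, Finsupp.single_eq_of_ne (by rintro rfl; exact hi hj),
              smul_zero]
        have hdeg' : ∀ i n, B.repr ((x - h) i) n ≠ 0 → n + degF i ≤ N - 1 := by
          intro i n hn
          rw [Finsupp.sub_apply, happ, map_sub, Finsupp.sub_apply, map_smul, B.repr_self,
            Finsupp.smul_apply, Finsupp.single_apply] at hn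
          by_cases hne : N - degF i = n
          · exfalso
            apply hn
            rw [if_pos hne, smul_eq_mul, mul_one, hlam]
            simp only []
            rw [hne]
            exact sub_self _
          · rw [if_neg hne, smul_zero, sub_zero] at hn
            have h1 := hdeg i n hn
            omega
        have hIH : x - h ∈ Submodule.span D {x : ι →₀ D | x ∈ LinearMap.ker φ ∧
            ∀ (i : ι) (n : ℕ), B.repr (x i) n ≠ 0 →
              (n : ℤ) + degF i ≤ (d : ℤ) - 1 + (p : ℤ) ^ (L + 1)} :=
          IH (N - 1) (by omega) (x - h) hxh hdeg'
        suffices hhT : h ∈ Submodule.span D {x : ι →₀ D | x ∈ LinearMap.ker φ ∧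
            ∀ (i : ι) (n : ℕ), B.repr (x i) n ≠ 0 →
              (n : ℤ) + degF i ≤ (d : ℤ) - 1 + (p : ℤ) ^ (L + 1)} by
          have hadd := Submodule.add_mem _ hIH hhT
          rwa [sub_add_cancel] at hadd
        rw [hh, ← Finset.sum_filter_add_sum_filter_not x.support
          (fun i => c i * ((N.choose (degF i) : ℕ) : k) = 0)]
        refine Submodule.add_mem _ ?_ ?_
        · -- degenerate part
          refine Submodule.sum_mem _ fun i hi => ?_
          rw [Finset.mem_filter] at hi
          obtain ⟨hiA, hie⟩ := hi
          by_cases hci : c i = 0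
          · have hgen : Finsupp.single i (1:D) ∈ {x : ι →₀ D | x ∈ LinearMap.ker φ ∧
                ∀ (i : ι) (n : ℕ), B.repr (x i) n ≠ 0 →
                  (n : ℤ) + degF i ≤ (d : ℤ) - 1 + (p : ℤ) ^ (L + 1)} := by
              constructor
              · rw [LinearMap.mem_ker, hc i, hci, zero_smul]
              · intro i₁ n hn
                rw [← hone] at hn
                obtain ⟨hi1, hn0⟩ := hrepr_single i i₁ 0 n hn
                subst hn0
                rw [hcond]
                have := hdegF i₁
                omega
            have hsing : Finsupp.single i (B (N - degF i))
                = B (N - degF i) • Finsupp.single i (1:D) := by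
              rw [Finsupp.smul_single, smul_eq_mul, mul_one]
            rw [hsing]
            exact hTk _ _ _ (Submodule.smul_mem _ _ (Submodule.subset_span hgen))
          · have he : degF i ≤ N := hdA i hiA
            have hdvd : p ∣ N.choose (degF i) := by
              apply (CharP.cast_eq_zero_iff k p _).mp
              by_contra hcon
              exact hcon (by
                rcases mul_eq_zero.mp hie with h0 | h0
                · exact absurd h0 hci
                · exact h0)
            have hdvd' : p ∣ (degF i + (N - degF i)).choose (degF i) := by
              rwa [Nat.add_sub_cancel' he]
            obtain ⟨a, ha1, ha2, ha3, ha4⟩ := genBD hp hL (hdegF i) hdvd'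
            have hgen : Finsupp.single i (B a) ∈ {x : ι →₀ D | x ∈ LinearMap.ker φ ∧
                ∀ (i : ι) (n : ℕ), B.repr (x i) n ≠ 0 →
                  (n : ℤ) + degF i ≤ (d : ℤ) - 1 + (p : ℤ) ^ (L + 1)} := by
              constructor
              · rw [LinearMap.mem_ker, phi_single, hmul]
                have hz : (((a + degF i).choose a : ℕ) : k) = 0 :=
                  (CharP.cast_eq_zero_iff k p _).mpr ha2
                rw [hz, zero_smul, smul_zero]
              · intro i₁ n hn
                obtain ⟨hi1, hna⟩ := hrepr_single i i₁ a n hn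
                subst hna
                subst hi1
                rw [hcond]
                exact ha1
            have hCne : (((N - degF i).choose a : ℕ) : k) ≠ 0 := fun h0 =>
              ha4 ((CharP.cast_eq_zero_iff k p _).mp h0)
            have hkey : Finsupp.single i (B (N - degF i))
                = (((N - degF i).choose a : ℕ) : k)⁻¹ •
                  (B ((N - degF i) - a) • Finsupp.single i (B a)) := by
              rw [Finsupp.smul_single, smul_eq_mul, hmul, Nat.sub_add_cancel ha3,
                Nat.choose_symm ha3, ← Finsupp.smul_single, inv_smul_smul₀ hCne]
            rw [hkey]
            exact hTk _ _ _ (hTk _ _ _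
              (Submodule.smul_mem _ _ (Submodule.subset_span hgen)))
        · -- essential part
          set S1 := x.support.filter
            (fun i => ¬ c i * ((N.choose (degF i) : ℕ) : k) = 0) with hS1
          rcases Finset.eq_empty_or_nonempty S1 with hS1e | hS1n
          · rw [hS1e, Finset.sum_empty]
            exact Submodule.zero_mem _
          obtain ⟨i₀, hi₀⟩ := hS1n
          have hmem : ∀ i ∈ S1, c i ≠ 0 ∧ degF i ≤ N ∧ ¬ p ∣ N.choose (degF i) := by
            intro i hi
            rw [hS1, Finset.mem_filter] at hi
            obtain ⟨hiA, hne⟩ := hi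
            have hc0 : c i ≠ 0 := fun h0 => hne (by rw [h0, zero_mul])
            have hC0 : ((N.choose (degF i) : ℕ) : k) ≠ 0 := fun h0 => hne (by rw [h0, mul_zero])
            refine ⟨hc0, ?_, fun hdv => hC0 ((CharP.cast_eq_zero_iff k p _).mpr hdv)⟩
            by_contra hcon
            push_neg at hcon
            rw [Nat.choose_eq_zero_of_lt hcon] at hC0
            simp at hC0
          have hrelS1 : (∑ i ∈ S1, lam i * (c i * ((N.choose (degF i) : ℕ) : k))) = 0 := by
            have hsplit := Finset.sum_filter_add_sum_filter_not x.support
              (fun i => c i * ((N.choose (degF i) : ℕ) : k) = 0)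
              (fun i => lam i * (c i * ((N.choose (degF i) : ℕ) : k)))
            have hz : (∑ i ∈ x.support.filter
                (fun i => c i * ((N.choose (degF i) : ℕ) : k) = 0),
                lam i * (c i * ((N.choose (degF i) : ℕ) : k))) = 0 := by
              refine Finset.sum_eq_zero fun i hi => ?_
              rw [(Finset.mem_filter.mp hi).2, mul_zero]
            have hAB := hsplit.trans hrel
            rw [hz, zero_add] at hAB
            rw [hS1]
            exact hAB
          have hW : ∀ i ∈ S1,
              (c i₀ * ((N.choose (degF i₀) : ℕ) : k)) • Finsupp.single i (B (N - degF i))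
              - (c i * ((N.choose (degF i) : ℕ) : k)) • Finsupp.single i₀ (B (N - degF i₀))
              ∈ Submodule.span D {x : ι →₀ D | x ∈ LinearMap.ker φ ∧
                ∀ (i : ι) (n : ℕ), B.repr (x i) n ≠ 0 →
                  (n : ℤ) + degF i ≤ (d : ℤ) - 1 + (p : ℤ) ^ (L + 1)} := by
            intro i hi
            obtain ⟨hc0, he, hnd⟩ := hmem i hi
            obtain ⟨hc0', he', hnd'⟩ := hmem i₀ hi₀
            obtain ⟨hle, hsub, hndq, hndm⟩ := modqD hp (s := L + 1) he
              (lt_of_le_of_lt (hdegF i) hdq) hnd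
            obtain ⟨hle', hsub', hndq', hndm'⟩ := modqD hp (s := L + 1) he'
              (lt_of_le_of_lt (hdegF i₀) hdq) hnd'
            rw [← hsub] at hndm
            rw [← hsub'] at hndm'
            set N₀ := N % p ^ (L + 1) with hN₀
            have hN₀N : N₀ ≤ N := Nat.mod_le _ _
            have hN₀M : N₀ ≤ M := by
              have hx1 : N₀ < p ^ (L + 1) := Nat.mod_lt _ (by omega)
              omega
            obtain ⟨u, hu⟩ : ∃ u : ι →₀ D, u =
                (c i₀ * ((N₀.choose (degF i₀) : ℕ) : k)) •
                  Finsupp.single i (B (N₀ - degF i))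
                - (c i * ((N₀.choose (degF i) : ℕ) : k)) •
                  Finsupp.single i₀ (B (N₀ - degF i₀)) := ⟨_, rfl⟩
            have huSS : u ∈ {x : ι →₀ D | x ∈ LinearMap.ker φ ∧
                ∀ (i : ι) (n : ℕ), B.repr (x i) n ≠ 0 →
                  (n : ℤ) + degF i ≤ (d : ℤ) - 1 + (p : ℤ) ^ (L + 1)} := by
              constructor
              · rw [LinearMap.mem_ker, hu, map_sub, phik, phik, phi_single, phi_single,
                  hmul, hmul, Nat.sub_add_cancel hle, Nat.sub_add_cancel hle',
                  Nat.choose_symm hle, Nat.choose_symm hle']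
                rw [smul_smul, smul_smul, smul_smul, smul_smul, ← sub_smul]
                have hzz : ∀ s : k, s = 0 → s • B N₀ = 0 := fun s hs => by
                  rw [hs, zero_smul]
                apply hzz
                ring
              · intro i₁ n hn
                rw [hu] at hn
                simp only [Finsupp.sub_apply, map_sub, Finsupp.smul_apply, map_smul,
                  smul_eq_mul] at hn
                have hcases :
                    B.repr ((Finsupp.single i (B (N₀ - degF i)) : ι →₀ D) i₁) n ≠ 0
                    ∨ B.repr ((Finsupp.single i₀ (B (N₀ - degF i₀)) : ι →₀ D) i₁) n ≠ 0 := by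
                  by_contra hboth
                  push_neg at hboth
                  rw [hboth.1, hboth.2] at hn
                  simp at hn
                rcases hcases with hcase | hcase
                · obtain ⟨hi1, hns⟩ := hrepr_single i i₁ _ n hcase
                  subst hi1
                  subst hns
                  rw [hcond]
                  omega
                · obtain ⟨hi1, hns⟩ := hrepr_single i₀ i₁ _ n hcase
                  subst hi1
                  subst hns
                  rw [hcond]
                  omega
            have harith : (N - N₀) + (N₀ - degF i) = N - degF i := by omega
            have harith' : (N - N₀) + (N₀ - degF i₀) = N - degF i₀ := by omega
            have hch : (N - degF i).choose (N - N₀) = (N - degF i).choose (N₀ - degF i) := by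
              rw [show N - N₀ = (N - degF i) - (N₀ - degF i) by omega,
                Nat.choose_symm (by omega)]
            have hch' : (N - degF i₀).choose (N - N₀)
                = (N - degF i₀).choose (N₀ - degF i₀) := by
              rw [show N - N₀ = (N - degF i₀) - (N₀ - degF i₀) by omega,
                Nat.choose_symm (by omega)]
            have hone_term : ∀ (i' : ι) (e0 : ℕ) (a : k), e0 ≤ N₀ →
                B (N - N₀) • (a • Finsupp.single i' (B (N₀ - e0)) : ι →₀ D)
                = (a * (((N - e0).choose (N₀ - e0) : ℕ) : k)) •
                    Finsupp.single i' (B (N - e0)) := by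
              intro i' e0 a he0
              rw [hsmulcomm, Finsupp.smul_single, smul_eq_mul, hmul]
              rw [show (N - N₀) + (N₀ - e0) = N - e0 by omega]
              rw [show (N - e0).choose (N - N₀) = (N - e0).choose (N₀ - e0) by
                rw [show N - N₀ = (N - e0) - (N₀ - e0) by omega,
                  Nat.choose_symm (by omega)]]
              rw [← Finsupp.smul_single, smul_smul]
            have hBu : B (N - N₀) • u =
                (c i₀ * ((N₀.choose (degF i₀) : ℕ) : k) *
                  (((N - degF i).choose (N₀ - degF i) : ℕ) : k)) •
                  Finsupp.single i (B (N - degF i))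
                - (c i * ((N₀.choose (degF i) : ℕ) : k) *
                  (((N - degF i₀).choose (N₀ - degF i₀) : ℕ) : k)) •
                  Finsupp.single i₀ (B (N - degF i₀)) := by
              rw [hu, smul_sub, hone_term i (degF i) _ hle, hone_term i₀ (degF i₀) _ hle']
            have hC2 : (((N - degF i).choose (N₀ - degF i) : ℕ) : k) ≠ 0 := fun h0 =>
              hndm ((CharP.cast_eq_zero_iff k p _).mp h0)
            have hC2' : (((N - degF i₀).choose (N₀ - degF i₀) : ℕ) : k) ≠ 0 := fun h0 =>
              hndm' ((CharP.cast_eq_zero_iff k p _).mp h0)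
            have hCq : ((N₀.choose (degF i) : ℕ) : k) ≠ 0 := fun h0 =>
              hndq ((CharP.cast_eq_zero_iff k p _).mp h0)
            have hCq' : ((N₀.choose (degF i₀) : ℕ) : k) ≠ 0 := fun h0 =>
              hndq' ((CharP.cast_eq_zero_iff k p _).mp h0)
            have hXne : c i₀ * ((N₀.choose (degF i₀) : ℕ) : k) *
                (((N - degF i).choose (N₀ - degF i) : ℕ) : k) ≠ 0 :=
              mul_ne_zero (mul_ne_zero hc0' hCq') hC2
            have hid : ((N.choose (degF i) : ℕ) : k) *
                (((N - degF i).choose (N₀ - degF i) : ℕ) : k)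
                = ((N₀.choose (degF i) : ℕ) : k) * ((N.choose N₀ : ℕ) : k) := by
              exact_mod_cast congrArg (Nat.cast (R := k)) (chidD hle hN₀N)
            have hid' : ((N.choose (degF i₀) : ℕ) : k) *
                (((N - degF i₀).choose (N₀ - degF i₀) : ℕ) : k)
                = ((N₀.choose (degF i₀) : ℕ) : k) * ((N.choose N₀ : ℕ) : k) := by
              exact_mod_cast congrArg (Nat.cast (R := k)) (chidD hle' hN₀N)
            have hkey : (c i₀ * ((N.choose (degF i₀) : ℕ) : k)) *
                (c i * ((N₀.choose (degF i) : ℕ) : k) *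
                  (((N - degF i₀).choose (N₀ - degF i₀) : ℕ) : k))
                = (c i * ((N.choose (degF i) : ℕ) : k)) *
                (c i₀ * ((N₀.choose (degF i₀) : ℕ) : k) *
                  (((N - degF i).choose (N₀ - degF i) : ℕ) : k)) := by
              linear_combination (c i₀ * c i * ((N₀.choose (degF i) : ℕ) : k)) * hid'
                - (c i * c i₀ * ((N₀.choose (degF i₀) : ℕ) : k)) * hid
            obtain ⟨sc, hsc⟩ : ∃ sc : k, sc = (c i₀ * ((N.choose (degF i₀) : ℕ) : k)) *
                (c i₀ * ((N₀.choose (degF i₀) : ℕ) : k) *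
                  (((N - degF i).choose (N₀ - degF i) : ℕ) : k))⁻¹ := ⟨_, rfl⟩
            have hs1 : sc * (c i₀ * ((N₀.choose (degF i₀) : ℕ) : k) *
                (((N - degF i).choose (N₀ - degF i) : ℕ) : k))
                = c i₀ * ((N.choose (degF i₀) : ℕ) : k) := by
              rw [hsc, mul_assoc, inv_mul_cancel₀ hXne, mul_one]
            have hs2 : sc * (c i * ((N₀.choose (degF i) : ℕ) : k) *
                (((N - degF i₀).choose (N₀ - degF i₀) : ℕ) : k))
                = c i * ((N.choose (degF i) : ℕ) : k) := by
              rw [hsc, mul_right_comm, hkey, mul_inv_cancel_right₀ hXne]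
            have hfin : (c i₀ * ((N.choose (degF i₀) : ℕ) : k)) •
                Finsupp.single i (B (N - degF i))
                - (c i * ((N.choose (degF i) : ℕ) : k)) •
                Finsupp.single i₀ (B (N - degF i₀))
                = sc • (B (N - N₀) • u) := by
              rw [hBu, smul_sub, smul_smul, smul_smul, hs1, hs2]
            rw [hfin]
            exact hTk _ _ _ (Submodule.smul_mem _ _ (Submodule.subset_span huSS))
          have hsum_eq : ∑ i ∈ S1, lam i •
              ((c i₀ * ((N.choose (degF i₀) : ℕ) : k)) • Finsupp.single i (B (N - degF i))
              - (c i * ((N.choose (degF i) : ℕ) : k)) •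
                Finsupp.single i₀ (B (N - degF i₀)))
              = (c i₀ * ((N.choose (degF i₀) : ℕ) : k)) •
                ∑ i ∈ S1, lam i • Finsupp.single i (B (N - degF i)) := by
            have h1 : ∀ i ∈ S1, lam i •
                ((c i₀ * ((N.choose (degF i₀) : ℕ) : k)) • Finsupp.single i (B (N - degF i))
                - (c i * ((N.choose (degF i) : ℕ) : k)) •
                  Finsupp.single i₀ (B (N - degF i₀)))
                = (c i₀ * ((N.choose (degF i₀) : ℕ) : k)) •
                    (lam i • Finsupp.single i (B (N - degF i)))
                  - (lam i * (c i * ((N.choose (degF i) : ℕ) : k))) •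
                    Finsupp.single i₀ (B (N - degF i₀)) := by
              intro i _
              rw [smul_sub, smul_smul, smul_smul, smul_smul,
                mul_comm (lam i) (c i₀ * ((N.choose (degF i₀) : ℕ) : k))]
            rw [Finset.sum_congr rfl h1, Finset.sum_sub_distrib, ← Finset.smul_sum,
              ← Finset.sum_smul, hrelS1, zero_smul, sub_zero]
          have hmemsum : (c i₀ * ((N.choose (degF i₀) : ℕ) : k)) •
              (∑ i ∈ S1, lam i • Finsupp.single i (B (N - degF i))) ∈ Submodule.span D {x : ι →₀ D | x ∈ LinearMap.ker φ ∧
                ∀ (i : ι) (n : ℕ), B.repr (x i) n ≠ 0 →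
                  (n : ℤ) + degF i ≤ (d : ℤ) - 1 + (p : ℤ) ^ (L + 1)} := by
            rw [← hsum_eq]
            exact Submodule.sum_mem _ fun i hi => hTk _ _ _ (hW i hi)
          have hε0 : c i₀ * ((N.choose (degF i₀) : ℕ) : k) ≠ 0 := by
            obtain ⟨hc0', he', hnd'⟩ := hmem i₀ hi₀
            exact mul_ne_zero hc0' (fun h0 => hnd' ((CharP.cast_eq_zero_iff k p _).mp h0))
          have hfinal := hTk (c i₀ * ((N.choose (degF i₀) : ℕ) : k))⁻¹ _ _ hmemsum
          rwa [inv_smul_smul₀ hε0] at hfinal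
  -- conclude
  refine le_antisymm ?_ (Submodule.span_le.mpr fun v hv => hv.1)
  intro x hx
  obtain ⟨N, hN⟩ : ∃ N, ∀ i n, B.repr (x i) n ≠ 0 → n + degF i ≤ N := by
    refine ⟨x.support.sup (fun i => (B.repr (x i)).support.sup fun n => n + degF i), ?_⟩
    intro i n hn
    have hxi : x i ≠ 0 := by
      intro h0
      rw [h0] at hn
      simp at hn
    exact le_trans
      (Finset.le_sup (f := fun n => n + degF i) (Finsupp.mem_support_iff.mpr hn))
      (Finset.le_sup (f := fun i => (B.repr (x i)).support.sup fun n => n + degF i)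
        (Finsupp.mem_support_iff.mpr hxi))
  exact key N x hx hN
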